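/- Let a probability distribution on the unit ball 𝔹ₙ ⊂ ℝⁿ have a density whose maximal value ρ_m satisfies ρ_m < C / (rⁿ Vₙ(𝔹ₙ)), where C > 0 and r > 0 do not depend on n. Let α ∈ (1/2, 1), let Y ⊂ 𝔹ₙ be finite with |Y| < bⁿ, and suppose 2rα > b > 1. Then a random point x sampled from this distribution is Fisher-separable from Y with threshold α (i.e., (x, y) ≤ α (x, x) for all y ∈ Y) with probability p = 1 − ψ, where ψ < C (b/(2rα))ⁿ. -/

import Mathlib

open MeasureTheory RealInnerProductSpace

/-- Theorem 1 (bounded density): if a probability distribution on the unit ball has a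
density bounded by `ρₘ < C / (rⁿ Vₙ(𝔹ₙ))`, `|Y| < bⁿ` and `2rα > b > 1`, then a random
point is Fisher-separable from `Y` with threshold `α` with probability `> 1 - C (b/(2rα))ⁿ`. -/
theorem fisher_separability_bounded_density
    (n : ℕ) (hn : 0 < n) (C r α b : ℝ) (hC : 0 < C) (hr : 0 < r)
    (hα : 1 / 2 < α) (hα1 : α < 1) (hb : 1 < b) (hbα : b < 2 * r * α)
    (ρ : EuclideanSpace ℝ (Fin n) → ℝ) (ρm : ℝ)
    (hρ0 : ∀ x, 0 ≤ ρ x)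
    (hρsupp : ∀ x ∉ Metric.closedBall (0 : EuclideanSpace ℝ (Fin n)) 1, ρ x = 0)
    (hρm : ∀ x, ρ x ≤ ρm)
    (hρmax : ρm < C / (r ^ n *
      (volume (Metric.closedBall (0 : EuclideanSpace ℝ (Fin n)) 1)).toReal))
    (μ : Measure (EuclideanSpace ℝ (Fin n)))
    (hμ : μ = volume.withDensity (fun x => ENNReal.ofReal (ρ x)))
    (hprob : IsProbabilityMeasure μ)
    (Y : Finset (EuclideanSpace ℝ (Fin n)))
    (hY : ∀ y ∈ Y, ‖y‖ ≤ 1)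
    (hcard : (Y.card : ℝ) < b ^ n) :
    (μ {x | ∀ y ∈ Y, ⟪x, y⟫ ≤ α * ⟪x, x⟫}).toReal > 1 - C * (b / (2 * r * α)) ^ n := by
  have hα0 : (0:ℝ) < α := by linarith
  have ht0 : (0:ℝ) < (2*α)⁻¹ := by positivity
  set V := volume (Metric.closedBall (0 : EuclideanSpace ℝ (Fin n)) 1) with hVdef
  have hVpos : 0 < V := by
    have : Nontrivial (EuclideanSpace ℝ (Fin n)) := by
      have : 0 < Module.finrank ℝ (EuclideanSpace ℝ (Fin n)) := by
        rw [finrank_euclideanSpace_fin]; exact hn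
      exact Module.nontrivial_of_finrank_pos this
    exact Metric.measure_closedBall_pos volume 0 one_pos
  have hVfin : V ≠ ⊤ := measure_closedBall_lt_top.ne
  set v := V.toReal with hvdef
  have hv : 0 < v := ENNReal.toReal_pos hVpos.ne' hVfin
  have hρm0 : 0 ≤ ρm := le_trans (hρ0 0) (hρm 0)
  set G := {x : EuclideanSpace ℝ (Fin n) | ∀ y ∈ Y, ⟪x, y⟫ ≤ α * ⟪x, x⟫} with hGdef
  have hGmeas : MeasurableSet G := by
    have : G = ⋂ y ∈ Y, {x : EuclideanSpace ℝ (Fin n) | ⟪x, y⟫ ≤ α * ⟪x, x⟫} := by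
      ext x; simp [hGdef]
    rw [this]
    refine Finset.measurableSet_biInter _ fun y _ => ?_
    exact (isClosed_le (continuous_id.inner continuous_const)
      (continuous_const.mul (continuous_id.inner continuous_id))).measurableSet
  -- per-point bad-set bound
  set K : ENNReal := ENNReal.ofReal ρm * (ENNReal.ofReal ((2*α)⁻¹ ^ n) * V) with hKdef
  have hKfin : K ≠ ⊤ := by
    simp [hKdef, ENNReal.mul_ne_top, hVfin, ENNReal.ofReal_ne_top]
  have key : ∀ y ∈ Y, μ {x : EuclideanSpace ℝ (Fin n) | α * ⟪x, x⟫ < ⟪x, y⟫} ≤ K := by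
    intro y hy
    set c : EuclideanSpace ℝ (Fin n) := (2*α)⁻¹ • y with hcdef
    have hsub : {x : EuclideanSpace ℝ (Fin n) | α * ⟪x, x⟫ < ⟪x, y⟫}
        ⊆ Metric.closedBall c ((2*α)⁻¹) := by
      intro x hx
      simp only [Set.mem_setOf_eq] at hx
      rw [Metric.mem_closedBall, dist_eq_norm]
      have h2 : ‖x - c‖^2 ≤ ((2*α)⁻¹)^2 := by
        have hexp : ‖x - c‖^2 = ‖x‖^2 - 2 * ⟪x, c⟫ + ‖c‖^2 := norm_sub_sq_real x c
        have h1 : ⟪x, c⟫ = (2*α)⁻¹ * ⟪x, y⟫ := real_inner_smul_right x y _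
        have hc : ‖c‖ = (2*α)⁻¹ * ‖y‖ := by
          rw [hcdef, norm_smul, Real.norm_eq_abs, abs_of_pos ht0]
        have hxn : ⟪x, x⟫ = ‖x‖^2 := real_inner_self_eq_norm_sq x
        have hyn : ‖y‖ ≤ 1 := hY y hy
        have hxy : α * ‖x‖^2 < ⟪x, y⟫ := by rwa [hxn] at hx
        have h3 : ‖x‖^2 ≤ 2 * ((2*α)⁻¹ * ⟪x, y⟫) := by
          have h5 := mul_lt_mul_of_pos_left hxy ht0
          have h4 : (2*α)⁻¹ * (α * ‖x‖^2) = ‖x‖^2 / 2 := by field_simp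
          linarith
        have hy2 : ((2*α)⁻¹ * ‖y‖)^2 ≤ ((2*α)⁻¹)^2 := by
          apply pow_le_pow_left₀ (by positivity)
          nlinarith [norm_nonneg y]
        rw [hexp, h1, hc]
        linarith
      nlinarith [norm_nonneg (x - c)]
    calc μ {x : EuclideanSpace ℝ (Fin n) | α * ⟪x, x⟫ < ⟪x, y⟫}
        ≤ μ (Metric.closedBall c ((2*α)⁻¹)) := measure_mono hsub
      _ = ∫⁻ x in Metric.closedBall c ((2*α)⁻¹), ENNReal.ofReal (ρ x) := by
          rw [hμ, withDensity_apply _ measurableSet_closedBall]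
      _ ≤ ∫⁻ _x in Metric.closedBall c ((2*α)⁻¹), ENNReal.ofReal ρm :=
          lintegral_mono fun x => ENNReal.ofReal_le_ofReal (hρm x)
      _ = ENNReal.ofReal ρm * volume (Metric.closedBall c ((2*α)⁻¹)) := by
          rw [setLIntegral_const]
      _ = K := by
          rw [hKdef, Measure.addHaar_closedBall' volume c ht0.le,
            finrank_euclideanSpace_fin]
  -- bad set bound
  have hcompl : Gᶜ ⊆ ⋃ y ∈ Y, {x : EuclideanSpace ℝ (Fin n) | α * ⟪x, x⟫ < ⟪x, y⟫} := by
    intro x hx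
    simp only [hGdef, Set.mem_compl_iff, Set.mem_setOf_eq] at hx
    push_neg at hx
    obtain ⟨y, hy, hlt⟩ := hx
    exact Set.mem_biUnion hy hlt
  have hbad : μ Gᶜ ≤ Y.card • K := by
    calc μ Gᶜ ≤ μ (⋃ y ∈ Y, {x : EuclideanSpace ℝ (Fin n) | α * ⟪x, x⟫ < ⟪x, y⟫}) :=
          measure_mono hcompl
      _ ≤ ∑ y ∈ Y, μ {x : EuclideanSpace ℝ (Fin n) | α * ⟪x, x⟫ < ⟪x, y⟫} :=
          measure_biUnion_finset_le Y _
      _ ≤ Y.card • K := Finset.sum_le_card_nsmul Y _ K key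
  have hKtoReal : (Y.card • K).toReal = Y.card * (ρm * ((2*α)⁻¹ ^ n * v)) := by
    rw [hKdef]
    rw [nsmul_eq_mul]
    rw [ENNReal.toReal_mul, ENNReal.toReal_mul, ENNReal.toReal_mul]
    rw [ENNReal.toReal_ofReal hρm0, ENNReal.toReal_ofReal (by positivity)]
    simp [hvdef]
  have hbadR : (μ Gᶜ).toReal ≤ Y.card * (ρm * ((2*α)⁻¹ ^ n * v)) := by
    rw [← hKtoReal]
    exact ENNReal.toReal_mono (by rw [nsmul_eq_mul]; exact ENNReal.mul_ne_top (ENNReal.natCast_ne_top _) hKfin) hbad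
  -- arithmetic bound on the bad probability
  have harith : (Y.card : ℝ) * (ρm * ((2*α)⁻¹ ^ n * v)) < C * (b / (2 * r * α)) ^ n := by
    have hrv : ρm * v < C / r ^ n := by
      rw [div_mul_eq_div_div] at hρmax
      have := (lt_div_iff₀ hv).mp hρmax
      linarith
    have hcard0 : (0:ℝ) ≤ Y.card := Nat.cast_nonneg _
    have hCr : (0:ℝ) < C / r ^ n := by positivity
    have hstep : (Y.card : ℝ) * (ρm * v) < b ^ n * (C / r ^ n) := by
      calc (Y.card : ℝ) * (ρm * v) ≤ (Y.card : ℝ) * (C / r ^ n) :=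
            mul_le_mul_of_nonneg_left (by nlinarith) hcard0
        _ < b ^ n * (C / r ^ n) := by
            exact mul_lt_mul_of_pos_right hcard hCr
    have hrw : C * (b / (2 * r * α)) ^ n = b ^ n * (C / r ^ n) * (2*α)⁻¹ ^ n := by
      rw [div_pow, mul_pow, mul_pow, inv_pow]
      field_simp
      ring
    rw [hrw]
    have ht : (0:ℝ) < (2*α)⁻¹ ^ n := by positivity
    calc (Y.card : ℝ) * (ρm * ((2*α)⁻¹ ^ n * v))
        = ((Y.card : ℝ) * (ρm * v)) * (2*α)⁻¹ ^ n := by ring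
      _ < b ^ n * (C / r ^ n) * (2*α)⁻¹ ^ n := mul_lt_mul_of_pos_right hstep ht
  -- conclude
  have hGc : μ G = 1 - μ Gᶜ := by
    rw [← prob_compl_eq_one_sub hGmeas.compl, compl_compl]
  have hGc1 : μ Gᶜ ≤ 1 := prob_le_one
  rw [hGc, ENNReal.toReal_sub_of_le hGc1 ENNReal.one_ne_top, ENNReal.toReal_one]
  have := lt_of_le_of_lt hbadR harith
  linarith
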